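/- Let B ≥ 1 and suppose H : [0,1] × [0,Φ] → ℂ^B × ℂ^B is continuous, writing H(s,φ) = (z_1(s,φ),…,z_B(s,φ), p_1(s,φ),…,p_B(s,φ)), such that for every s ∈ [0,1] the curves φ ↦ z_i(s,φ), φ ↦ p_j(s,φ) are C¹ in φ and form a closed configuration of B zeros and B poles (z_i(s,φ) ≠ p_j(s,φ) for all i,j,φ, with the initial and final multisets of zeros agreeing and the initial and final multisets of poles agreeing). Then the integer N(L_s) = (i/2π) ∑_{i,j=1}^{B} ∫_0^Φ (∂_φ z_i(s,φ) − ∂_φ p_j(s,φ))/(z_i(s,φ) − p_j(s,φ)) dφ is independent of s; in particular N(L_0) = N(L_1). -/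

import Mathlib

open scoped Real

set_option maxHeartbeats 1000000 in
/-- Given a continuous family (over `s ∈ [0,1]`) of closed
configurations of `B` zeros and `B` poles on `[0,Φ]`, each C¹ in `φ`, the integer
`N(L_s) = (i/2π) ∑_{i,j} ∫_0^Φ (∂_φ z_i - ∂_φ p_j)/(z_i - p_j) dφ` is independent
of `s`; in particular `N(L_0) = N(L_1)`. -/
theorem N_homotopy_invariant
    (B : ℕ) (hB : 1 ≤ B) (Φ : ℝ) (hΦ : 0 ≤ Φ)
    (z p z' p' : Fin B → ℝ → ℝ → ℂ)
    (hzc : ∀ i, ContinuousOn (fun sφ : ℝ × ℝ => z i sφ.1 sφ.2)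
      (Set.Icc 0 1 ×ˢ Set.Icc 0 Φ))
    (hpc : ∀ j, ContinuousOn (fun sφ : ℝ × ℝ => p j sφ.1 sφ.2)
      (Set.Icc 0 1 ×ˢ Set.Icc 0 Φ))
    (hz : ∀ i, ∀ s ∈ Set.Icc (0:ℝ) 1, ∀ φ ∈ Set.Icc 0 Φ,
      HasDerivAt (z i s) (z' i s φ) φ)
    (hp : ∀ j, ∀ s ∈ Set.Icc (0:ℝ) 1, ∀ φ ∈ Set.Icc 0 Φ,
      HasDerivAt (p j s) (p' j s φ) φ)
    (hz' : ∀ i, ∀ s ∈ Set.Icc (0:ℝ) 1, ContinuousOn (z' i s) (Set.Icc 0 Φ))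
    (hp' : ∀ j, ∀ s ∈ Set.Icc (0:ℝ) 1, ContinuousOn (p' j s) (Set.Icc 0 Φ))
    (hne : ∀ i j, ∀ s ∈ Set.Icc (0:ℝ) 1, ∀ φ ∈ Set.Icc 0 Φ, z i s φ ≠ p j s φ)
    (hzper : ∀ s ∈ Set.Icc (0:ℝ) 1,
      Multiset.map (fun i => z i s Φ) Finset.univ.val
        = Multiset.map (fun i => z i s 0) Finset.univ.val)
    (hpper : ∀ s ∈ Set.Icc (0:ℝ) 1,
      Multiset.map (fun j => p j s Φ) Finset.univ.val
        = Multiset.map (fun j => p j s 0) Finset.univ.val) :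
    ∀ s₁ ∈ Set.Icc (0:ℝ) 1, ∀ s₂ ∈ Set.Icc (0:ℝ) 1,
      Complex.I / (2 * π) *
          ∑ i : Fin B, ∑ j : Fin B,
            ∫ φ in (0:ℝ)..Φ, (z' i s₁ φ - p' j s₁ φ) / (z i s₁ φ - p j s₁ φ)
        = Complex.I / (2 * π) *
            ∑ i : Fin B, ∑ j : Fin B,
              ∫ φ in (0:ℝ)..Φ, (z' i s₂ φ - p' j s₂ φ) / (z i s₂ φ - p j s₂ φ) := by
  classical
  -- Abbreviations
  have hSne : (0:ℝ) ∈ Set.Icc (0:ℝ) 1 := by constructor <;> norm_num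
  have hTne : (0:ℝ) ∈ Set.Icc (0:ℝ) Φ := ⟨le_refl _, hΦ⟩
  have hΦT : Φ ∈ Set.Icc (0:ℝ) Φ := ⟨hΦ, le_refl _⟩
  set T : Set ℝ := Set.Icc 0 Φ with hT
  set S : Set ℝ := Set.Icc (0:ℝ) 1 with hSdef
  -- continuity of z, p in φ for fixed s
  have hzT : ∀ i, ∀ s ∈ S, ContinuousOn (z i s) T := fun i s hs φ hφ =>
    (hz i s hs φ hφ).continuousAt.continuousWithinAt
  have hpT : ∀ j, ∀ s ∈ S, ContinuousOn (p j s) T := fun j s hs φ hφ =>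
    (hp j s hs φ hφ).continuousAt.continuousWithinAt
  have hgne : ∀ i j, ∀ s ∈ S, ∀ φ ∈ T, z i s φ - p j s φ ≠ 0 := fun i j s hs φ hφ =>
    sub_ne_zero.mpr (hne i j s hs φ hφ)
  -- the big product
  set W : ℝ → ℝ → ℂ := fun s φ => ∏ i : Fin B, ∏ j : Fin B, (z i s φ - p j s φ) with hWdef
  have hWne : ∀ s ∈ S, ∀ φ ∈ T, W s φ ≠ 0 := by
    intro s hs φ hφ
    exact Finset.prod_ne_zero_iff.mpr fun i _ =>
      Finset.prod_ne_zero_iff.mpr fun j _ => hgne i j s hs φ hφ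
  have hWc : ContinuousOn (fun sφ : ℝ × ℝ => W sφ.1 sφ.2) (S ×ˢ T) := by
    apply continuousOn_finset_prod
    intro i _
    apply continuousOn_finset_prod
    intro j _
    exact (hzc i).sub (hpc j)
  -- periodicity of W
  have hWper : ∀ s ∈ S, W s Φ = W s 0 := by
    intro s hs
    have inner : ∀ a : ℂ, (∏ j : Fin B, (a - p j s Φ)) = ∏ j : Fin B, (a - p j s 0) := by
      intro a
      have h := congrArg (fun M : Multiset ℂ => (M.map fun b => a - b).prod) (hpper s hs)
      simpa [Finset.prod_eq_multiset_prod, Multiset.map_map, Function.comp_def] using h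
    have houter :
        (∏ i : Fin B, ∏ j : Fin B, (z i s Φ - p j s 0))
          = ∏ i : Fin B, ∏ j : Fin B, (z i s 0 - p j s 0) := by
      have h := congrArg
        (fun M : Multiset ℂ => (M.map fun a => ∏ j : Fin B, (a - p j s 0)).prod) (hzper s hs)
      simpa [Finset.prod_eq_multiset_prod, Multiset.map_map, Function.comp_def] using h
    calc W s Φ = ∏ i : Fin B, ∏ j : Fin B, (z i s Φ - p j s 0) :=
          Finset.prod_congr rfl fun i _ => inner (z i s Φ)
      _ = ∏ i : Fin B, ∏ j : Fin B, (z i s 0 - p j s 0) := houter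
      _ = W s 0 := rfl
  -- positive lower bound for ‖W‖ on the compact set
  have hK : IsCompact (S ×ˢ T) := isCompact_Icc.prod isCompact_Icc
  have hKne : (S ×ˢ T).Nonempty := ⟨(0, 0), Set.mk_mem_prod hSne hTne⟩
  obtain ⟨x₀, hx₀, hmin'⟩ := hK.exists_isMinOn hKne hWc.norm
  have hmin : ∀ y ∈ S ×ˢ T, ‖W x₀.1 x₀.2‖ ≤ ‖W y.1 y.2‖ := fun y hy => hmin' hy
  set m : ℝ := ‖W x₀.1 x₀.2‖ with hm
  have hmpos : 0 < m := by
    have := hWne x₀.1 hx₀.1 x₀.2 hx₀.2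
    simpa [hm, norm_pos_iff] using this
  -- uniform continuity of W on the compact set
  have hUC := hK.uniformContinuousOn_of_continuous hWc
  rw [Metric.uniformContinuousOn_iff] at hUC
  obtain ⟨δ, hδpos, hδ⟩ := hUC m hmpos
  -- derivatives of the pair functions
  have hpair : ∀ i j, ∀ s ∈ S, ∀ φ ∈ T,
      HasDerivAt (fun φ => z i s φ - p j s φ) (z' i s φ - p' j s φ) φ :=
    fun i j s hs φ hφ => (hz i s hs φ hφ).sub (hp j s hs φ hφ)
  -- differentiability of W in φ
  have hWdiff : ∀ s ∈ S, ∀ φ ∈ T, DifferentiableAt ℝ (W s) φ := by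
    intro s hs φ hφ
    have : ∀ i : Fin B, ∀ _ : i ∈ (Finset.univ : Finset (Fin B)),
        HasDerivAt (fun φ => ∏ j : Fin B, (z i s φ - p j s φ))
          (∑ j : Fin B, (∏ k ∈ Finset.univ.erase j, (z i s φ - p k s φ)) *
            (z' i s φ - p' j s φ)) φ :=
      fun i _ => HasDerivAt.fun_finsetProd fun j _ => hpair i j s hs φ hφ
    exact (HasDerivAt.fun_finsetProd this).differentiableAt
  -- logDeriv of W
  have hlogW : ∀ s ∈ S, ∀ φ ∈ T, logDeriv (W s) φ
      = ∑ i : Fin B, ∑ j : Fin B, (z' i s φ - p' j s φ) / (z i s φ - p j s φ) := by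
    intro s hs φ hφ
    have h1 : logDeriv (W s) φ
        = ∑ i : Fin B, logDeriv (fun φ => ∏ j : Fin B, (z i s φ - p j s φ)) φ := by
      apply logDeriv_prod
      · exact fun i _ => Finset.prod_ne_zero_iff.mpr fun j _ => hgne i j s hs φ hφ
      · exact fun i _ =>
          (HasDerivAt.fun_finsetProd fun j _ => hpair i j s hs φ hφ).differentiableAt
    rw [h1]
    refine Finset.sum_congr rfl fun i _ => ?_
    have h2 : logDeriv (fun φ => ∏ j : Fin B, (z i s φ - p j s φ)) φ
        = ∑ j : Fin B, logDeriv (fun φ => z i s φ - p j s φ) φ := by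
      apply logDeriv_prod
      · exact fun j _ => hgne i j s hs φ hφ
      · exact fun j _ => (hpair i j s hs φ hφ).differentiableAt
    rw [h2]
    refine Finset.sum_congr rfl fun j _ => ?_
    rw [logDeriv_apply, (hpair i j s hs φ hφ).deriv]
  -- interval integrability of each summand
  have hcontpair : ∀ s ∈ S, ∀ i j, ContinuousOn
      (fun φ => (z' i s φ - p' j s φ) / (z i s φ - p j s φ)) T := fun s hs i j =>
    ((hz' i s hs).sub (hp' j s hs)).div
      ((hzT i s hs).sub (hpT j s hs)) (fun φ hφ => hgne i j s hs φ hφ)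
  have hint : ∀ s ∈ S, ∀ i j, IntervalIntegrable
      (fun φ => (z' i s φ - p' j s φ) / (z i s φ - p j s φ))
      MeasureTheory.volume 0 Φ := by
    intro s hs i j
    apply ContinuousOn.intervalIntegrable
    rw [Set.uIcc_of_le hΦ]
    exact hcontpair s hs i j
  have hintinner : ∀ s ∈ S, ∀ i, IntervalIntegrable
      (fun φ => ∑ j : Fin B, (z' i s φ - p' j s φ) / (z i s φ - p j s φ))
      MeasureTheory.volume 0 Φ := by
    intro s hs i
    apply ContinuousOn.intervalIntegrable
    rw [Set.uIcc_of_le hΦ]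
    exact continuousOn_finset_sum _ fun j _ => hcontpair s hs i j
  have hintsum : ∀ s ∈ S, IntervalIntegrable
      (fun φ => ∑ i : Fin B, ∑ j : Fin B, (z' i s φ - p' j s φ) / (z i s φ - p j s φ))
      MeasureTheory.volume 0 Φ := by
    intro s hs
    apply ContinuousOn.intervalIntegrable
    rw [Set.uIcc_of_le hΦ]
    exact continuousOn_finset_sum _ fun i _ =>
      continuousOn_finset_sum _ fun j _ => hcontpair s hs i j
  -- the key local constancy result
  have key : ∀ s₀ ∈ S, ∀ s ∈ S, |s - s₀| < δ →
      (∑ i : Fin B, ∑ j : Fin B,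
        ∫ φ in (0:ℝ)..Φ, (z' i s φ - p' j s φ) / (z i s φ - p j s φ))
      = ∑ i : Fin B, ∑ j : Fin B,
        ∫ φ in (0:ℝ)..Φ, (z' i s₀ φ - p' j s₀ φ) / (z i s₀ φ - p j s₀ φ) := by
    intro s₀ hs₀ s hs hclose
    -- the ratio stays in the slit plane
    have hratio : ∀ φ ∈ T, W s φ / W s₀ φ ∈ Complex.slitPlane := by
      intro φ hφ
      have hd : dist ((s, φ) : ℝ × ℝ) (s₀, φ) < δ := by
        rw [Prod.dist_eq, Real.dist_eq, Real.dist_eq]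
        simpa using hclose
      have h1 : ‖W s φ - W s₀ φ‖ < m := by
        have := hδ (s, φ) (Set.mk_mem_prod hs hφ) (s₀, φ) (Set.mk_mem_prod hs₀ hφ) hd
        simpa [dist_eq_norm] using this
      have h0 : W s₀ φ ≠ 0 := hWne s₀ hs₀ φ hφ
      have hmle : m ≤ ‖W s₀ φ‖ := hmin (s₀, φ) (Set.mk_mem_prod hs₀ hφ)
      have hsub : ‖W s φ / W s₀ φ - 1‖ < 1 := by
        have : W s φ / W s₀ φ - 1 = (W s φ - W s₀ φ) / W s₀ φ := by
          field_simp
        rw [this, norm_div, div_lt_one (norm_pos_iff.mpr h0)]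
        exact lt_of_lt_of_le h1 hmle
      rw [Complex.mem_slitPlane_iff]
      left
      set r : ℂ := W s φ / W s₀ φ
      have h2 : |(r - 1).re| ≤ ‖r - 1‖ := by
        simpa using Complex.abs_re_le_norm (r - 1)
      have h3 : (r - 1).re = r.re - 1 := by simp
      have h4 : -(1:ℝ) < (r - 1).re := by
        have := neg_abs_le ((r - 1).re)
        linarith [lt_of_le_of_lt h2 hsub]
      linarith
    -- derivative of the log of the ratio
    set q : ℝ → ℂ := fun φ => W s φ / W s₀ φ with hq
    have hqd : ∀ φ ∈ T, DifferentiableAt ℝ q φ := fun φ hφ =>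
      (hWdiff s hs φ hφ).div (hWdiff s₀ hs₀ φ hφ) (hWne s₀ hs₀ φ hφ)
    have hD : ∀ φ ∈ T, HasDerivAt (fun φ => Complex.log (q φ))
        ((∑ i : Fin B, ∑ j : Fin B, (z' i s φ - p' j s φ) / (z i s φ - p j s φ))
          - ∑ i : Fin B, ∑ j : Fin B, (z' i s₀ φ - p' j s₀ φ) / (z i s₀ φ - p j s₀ φ)) φ := by
      intro φ hφ
      have h1 : HasDerivAt q (deriv q φ) φ := (hqd φ hφ).hasDerivAt
      have h2 := h1.clog_real (hratio φ hφ)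
      have h3 : deriv q φ / q φ = logDeriv q φ := (logDeriv_apply q φ).symm
      rw [h3] at h2
      have h4 : logDeriv q φ = logDeriv (W s) φ - logDeriv (W s₀) φ :=
        logDeriv_div φ (hWne s hs φ hφ) (hWne s₀ hs₀ φ hφ)
          (hWdiff s hs φ hφ) (hWdiff s₀ hs₀ φ hφ)
      rw [h4, hlogW s hs φ hφ, hlogW s₀ hs₀ φ hφ] at h2
      exact h2
    -- fundamental theorem of calculus
    have hftc : (∫ φ in (0:ℝ)..Φ,
        ((∑ i : Fin B, ∑ j : Fin B, (z' i s φ - p' j s φ) / (z i s φ - p j s φ))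
          - ∑ i : Fin B, ∑ j : Fin B, (z' i s₀ φ - p' j s₀ φ) / (z i s₀ φ - p j s₀ φ)))
        = Complex.log (q Φ) - Complex.log (q 0) := by
      apply intervalIntegral.integral_eq_sub_of_hasDerivAt
      · intro φ hφ
        rw [Set.uIcc_of_le hΦ] at hφ
        exact hD φ hφ
      · exact (hintsum s hs).sub (hintsum s₀ hs₀)
    have hq0 : q Φ = q 0 := by
      simp only [hq, hWper s hs, hWper s₀ hs₀]
    rw [hq0, sub_self] at hftc
    have hsplit : (∫ φ in (0:ℝ)..Φ,
        ((∑ i : Fin B, ∑ j : Fin B, (z' i s φ - p' j s φ) / (z i s φ - p j s φ))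
          - ∑ i : Fin B, ∑ j : Fin B, (z' i s₀ φ - p' j s₀ φ) / (z i s₀ φ - p j s₀ φ)))
        = (∫ φ in (0:ℝ)..Φ,
            ∑ i : Fin B, ∑ j : Fin B, (z' i s φ - p' j s φ) / (z i s φ - p j s φ))
          - ∫ φ in (0:ℝ)..Φ,
            ∑ i : Fin B, ∑ j : Fin B, (z' i s₀ φ - p' j s₀ φ) / (z i s₀ φ - p j s₀ φ) :=
      intervalIntegral.integral_sub (hintsum s hs) (hintsum s₀ hs₀)
    have hswap : ∀ s' ∈ S, (∫ φ in (0:ℝ)..Φ,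
        ∑ i : Fin B, ∑ j : Fin B, (z' i s' φ - p' j s' φ) / (z i s' φ - p j s' φ))
        = ∑ i : Fin B, ∑ j : Fin B,
            ∫ φ in (0:ℝ)..Φ, (z' i s' φ - p' j s' φ) / (z i s' φ - p j s' φ) := by
      intro s' hs'
      rw [intervalIntegral.integral_finset_sum
        (fun i _ => hintinner s' hs' i)]
      exact Finset.sum_congr rfl fun i _ =>
        intervalIntegral.integral_finset_sum (fun j _ => hint s' hs' i j)
    rw [hsplit, hswap s hs, hswap s₀ hs₀] at hftc
    exact sub_eq_zero.mp hftc
  -- conclude by local constancy on the connected interval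
  intro s₁ hs₁ s₂ hs₂
  suffices h : (∑ i : Fin B, ∑ j : Fin B,
      ∫ φ in (0:ℝ)..Φ, (z' i s₁ φ - p' j s₁ φ) / (z i s₁ φ - p j s₁ φ))
      = ∑ i : Fin B, ∑ j : Fin B,
        ∫ φ in (0:ℝ)..Φ, (z' i s₂ φ - p' j s₂ φ) / (z i s₂ φ - p j s₂ φ) by
    rw [h]
  haveI : PreconnectedSpace S := Subtype.preconnectedSpace isPreconnected_Icc
  set G : S → ℂ := fun s => ∑ i : Fin B, ∑ j : Fin B,
    ∫ φ in (0:ℝ)..Φ, (z' i (s : ℝ) φ - p' j (s : ℝ) φ) / (z i (s : ℝ) φ - p j (s : ℝ) φ)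
    with hG
  have hlc : IsLocallyConstant G := by
    rw [IsLocallyConstant.iff_exists_open]
    intro x
    refine ⟨Metric.ball x δ, Metric.isOpen_ball, Metric.mem_ball_self hδpos, ?_⟩
    intro y hy
    have hdist : |(y : ℝ) - (x : ℝ)| < δ := by
      have : dist y x < δ := hy
      rwa [Subtype.dist_eq, Real.dist_eq] at this
    exact key (x : ℝ) x.2 (y : ℝ) y.2 hdist
  exact hlc.apply_eq_of_preconnectedSpace ⟨s₁, hs₁⟩ ⟨s₂, hs₂⟩
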